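/- Fix μ > 0, a real s×r matrix V with Vᵀ V = I_r, and a real p×s matrix B. Define the entrywise soft-thresholding S_{1/μ} by applying, to each entry c of a matrix, the map c ↦ c − 1/μ if c > 1/μ, c ↦ c + 1/μ if c < −1/μ, and c ↦ 0 otherwise. Then U* = S_{1/μ}(B V) is a global minimizer over U ∈ ℝ^{p×r} of the function U ↦ ‖U‖₁ + (μ/2)‖U Vᵀ − B‖_F². -/

import Mathlib

open Matrix BigOperators

/-- The Frobenius norm of a real matrix, `‖M‖_F = sqrt (trace (Mᵀ M))`. -/
noncomputable def frobNorm {p q : ℕ} (M : Matrix (Fin p) (Fin q) ℝ) : ℝ :=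
  Real.sqrt ((Mᵀ * M).trace)

/-- The entrywise ℓ₁ norm of a real matrix. -/
def l1Norm {p q : ℕ} (M : Matrix (Fin p) (Fin q) ℝ) : ℝ :=
  ∑ i, ∑ j, |M i j|

/-- The scalar soft-thresholding operator `S_Δ`. -/
noncomputable def softThresh (Δ a : ℝ) : ℝ :=
  if a > Δ then a - Δ else if a < -Δ then a + Δ else 0

/-- Entrywise soft-thresholding of a matrix. -/
noncomputable def softThreshMat {p q : ℕ} (Δ : ℝ)
    (C : Matrix (Fin p) (Fin q) ℝ) : Matrix (Fin p) (Fin q) ℝ :=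
  Matrix.of fun i j => softThresh Δ (C i j)

lemma softThresh_scalar_min (μ : ℝ) (hμ : 0 < μ) (c u : ℝ) :
    |softThresh (1/μ) c| + (μ/2) * (softThresh (1/μ) c - c)^2 ≤
      |u| + (μ/2) * (u - c)^2 := by
  have hΔ : 0 < 1/μ := by positivity
  set sc := softThresh (1/μ) c with hs
  obtain ⟨t, ht1, hts, htc⟩ : ∃ t : ℝ, |t| ≤ 1 ∧ t * sc = |sc| ∧ t = μ * (c - sc) := by
    rw [hs]; unfold softThresh
    split_ifs with h1 h2
    · refine ⟨1, by norm_num, ?_, ?_⟩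
      · rw [one_mul, abs_of_pos]; linarith
      · field_simp; ring
    · refine ⟨-1, by norm_num, ?_, ?_⟩
      · rw [neg_one_mul, abs_of_neg]; linarith
      · field_simp; ring
    · refine ⟨μ * c, ?_, by simp, by ring⟩
      rw [abs_mul, abs_of_pos hμ]
      rcases le_or_gt 0 c with hc | hc
      · rw [abs_of_nonneg hc]
        calc μ * c ≤ μ * (1/μ) := by apply mul_le_mul_of_nonneg_left (by linarith) hμ.le
        _ = 1 := by field_simp
      · rw [abs_of_neg hc]
        have : -(1/μ) ≤ c := by linarith
        calc μ * -c ≤ μ * (1/μ) := by apply mul_le_mul_of_nonneg_left (by linarith) hμ.le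
        _ = 1 := by field_simp
  have habs : t * u ≤ |u| := by
    calc t * u ≤ |t * u| := le_abs_self _
    _ = |t| * |u| := abs_mul _ _
    _ ≤ 1 * |u| := mul_le_mul_of_nonneg_right ht1 (abs_nonneg u)
    _ = |u| := one_mul _
  have hkey : (μ/2)*(u-c)^2 - (μ/2)*(sc-c)^2 + t*u - t*sc = (μ/2)*(u-sc)^2 := by
    rw [htc]; ring
  have hsq : (0:ℝ) ≤ (μ/2)*(u-sc)^2 := by positivity
  linarith [habs, hkey, hts, hsq]

lemma trace_entry {p q : ℕ} (M : Matrix (Fin p) (Fin q) ℝ) :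
    (Mᵀ * M).trace = ∑ i, ∑ j, (M i j)^2 := by
  rw [Matrix.trace]
  simp only [Matrix.diag, Matrix.mul_apply, Matrix.transpose_apply]
  rw [Finset.sum_comm]
  simp [sq]

lemma frob_sq_trace {p q : ℕ} (M : Matrix (Fin p) (Fin q) ℝ) :
    frobNorm M ^ 2 = (Mᵀ * M).trace := by
  rw [frobNorm, Real.sq_sqrt]
  rw [trace_entry]
  positivity

lemma trace_shift {p s r : ℕ}
    (V : Matrix (Fin s) (Fin r) ℝ) (hV : Vᵀ * V = 1)
    (B : Matrix (Fin p) (Fin s) ℝ) (U : Matrix (Fin p) (Fin r) ℝ) :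
    ((U * Vᵀ - B)ᵀ * (U * Vᵀ - B)).trace =
      ((U - B * V)ᵀ * (U - B * V)).trace +
        ((Bᵀ * B).trace - ((B * V)ᵀ * (B * V)).trace) := by
  have h1 : ((U * Vᵀ)ᵀ * (U * Vᵀ)).trace = (Uᵀ * U).trace := by
    rw [Matrix.transpose_mul, Matrix.transpose_transpose]
    calc (V * Uᵀ * (U * Vᵀ)).trace = ((V * (Uᵀ * U)) * Vᵀ).trace := by
          rw [Matrix.mul_assoc, Matrix.mul_assoc, Matrix.mul_assoc]
    _ = (Vᵀ * (V * (Uᵀ * U))).trace := by rw [Matrix.trace_mul_comm]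
    _ = ((Vᵀ * V) * (Uᵀ * U)).trace := by rw [Matrix.mul_assoc]
    _ = (Uᵀ * U).trace := by rw [hV, Matrix.one_mul]
  have h2 : ((U * Vᵀ)ᵀ * B).trace = (Uᵀ * (B * V)).trace := by
    rw [Matrix.transpose_mul, Matrix.transpose_transpose, Matrix.mul_assoc]
    rw [Matrix.trace_mul_comm, Matrix.mul_assoc]
  have h3 : (Bᵀ * (U * Vᵀ)).trace = (Uᵀ * (B * V)).trace := by
    rw [← Matrix.trace_transpose (Bᵀ * (U * Vᵀ))]
    rw [Matrix.transpose_mul, Matrix.transpose_transpose]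
    rw [Matrix.transpose_mul, Matrix.transpose_transpose, Matrix.mul_assoc]
    rw [Matrix.trace_mul_comm, Matrix.mul_assoc]
  have h4 : ((B * V)ᵀ * U).trace = (Uᵀ * (B * V)).trace := by
    rw [← Matrix.trace_transpose ((B * V)ᵀ * U), Matrix.transpose_mul,
      Matrix.transpose_transpose]
  simp only [Matrix.transpose_sub, Matrix.sub_mul, Matrix.mul_sub, Matrix.trace_sub]
  rw [h1, h2, h3, h4]
  ring

/-- Closed-form solution (Eq. (22)) of the U-subproblem (20): for `V` with orthonormal
columns, `U* = S_{1/μ}(B V)` globally minimizes `U ↦ ‖U‖₁ + (μ/2)‖U Vᵀ − B‖_F²`. -/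
theorem softThreshMat_minimizes_U_subproblem {p s r : ℕ} (μ : ℝ) (hμ : 0 < μ)
    (V : Matrix (Fin s) (Fin r) ℝ) (hV : Vᵀ * V = 1)
    (B : Matrix (Fin p) (Fin s) ℝ) :
    ∀ U : Matrix (Fin p) (Fin r) ℝ,
      l1Norm (softThreshMat (1 / μ) (B * V)) +
          (μ / 2) * frobNorm (softThreshMat (1 / μ) (B * V) * Vᵀ - B) ^ 2 ≤
        l1Norm U + (μ / 2) * frobNorm (U * Vᵀ - B) ^ 2 := by
  intro U
  set C := B * V with hC
  set K := (Bᵀ * B).trace - (Cᵀ * C).trace with hK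
  have objeq : ∀ W : Matrix (Fin p) (Fin r) ℝ,
      l1Norm W + (μ/2) * frobNorm (W * Vᵀ - B) ^ 2 =
        (∑ i, ∑ j, (|W i j| + (μ/2) * (W i j - C i j)^2)) + (μ/2) * K := by
    intro W
    rw [frob_sq_trace, trace_shift V hV B W, trace_entry]
    simp only [l1Norm, Matrix.sub_apply, mul_add, Finset.mul_sum, Finset.sum_add_distrib]
    ring
  rw [objeq U, objeq (softThreshMat (1/μ) C)]
  have entry : ∀ i j, |softThreshMat (1/μ) C i j| +
      (μ/2) * (softThreshMat (1/μ) C i j - C i j)^2 ≤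
      |U i j| + (μ/2) * (U i j - C i j)^2 := by
    intro i j
    simpa [softThreshMat] using softThresh_scalar_min μ hμ (C i j) (U i j)
  refine add_le_add (Finset.sum_le_sum fun i _ => Finset.sum_le_sum fun j _ => ?_) le_rfl
  exact entry i j
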